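/- Let Ω ⊆ ℝ^d be a measurable set with finite positive Lebesgue measure, let λ ∈ (0,1) and η, β > 0, let Q : Ω → ℝ be bounded measurable, and let μ : Ω → ℝ be a probability density on Ω bounded above and below by positive constants. Define δ = λη/(1+λη), κ = β(1+λη)/η, Z = ∫_Ω μ(a)^δ·exp(Q(a)/κ) da, and π*(a) = (1/Z)·μ(a)^δ·exp(Q(a)/κ). Then π* is a probability density bounded above and below by positive constants, and it is a fixed point of the Mirror Descent update: π* is the unique (up to almost-everywhere equality) maximizer, over all probability densities π on Ω, of the objective J(π; π*) = ∫_Ω π(a)[(1/β)Q(a) − (1/η)·log π*(a)] da − (1−λ)·KL(π‖π*) − λ·KL(π‖μ). -/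

import Mathlib

open MeasureTheory Classical

/-- KL divergence between two probability densities `p, f` w.r.t. the measure `ν`,
valued in the extended reals: `KL(p‖f) = ∫ p log(p/f) dν`, set to `+∞` when the
integrand is not integrable. -/
noncomputable def klE {α : Type*} [MeasurableSpace α] (ν : Measure α)
    (p f : α → ℝ) : EReal :=
  if Integrable (fun a => p a * Real.log (p a / f a)) ν
  then ((∫ a, p a * Real.log (p a / f a) ∂ν : ℝ) : EReal)
  else ⊤

/-- `p` is a probability density with respect to the measure `ν`. -/
def IsProbDensity {α : Type*} [MeasurableSpace α] (ν : Measure α) (p : α → ℝ) : Prop :=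
  Measurable p ∧ (∀ᵐ a ∂ν, 0 ≤ p a) ∧ ∫ a, p a ∂ν = 1

lemma IsProbDensity.integrable {α : Type*} [MeasurableSpace α] {ν : Measure α} {p : α → ℝ}
    (hp : IsProbDensity ν p) : Integrable p ν := by
  by_contra h
  exact one_ne_zero (hp.2.2.symm.trans (integral_undef h))

lemma gibbs_aux {α : Type*} [MeasurableSpace α] {ν : Measure α} {p q : α → ℝ}
    (hp : IsProbDensity ν p) (hq : IsProbDensity ν q) (hqpos : ∀ᵐ a ∂ν, 0 < q a)
    (hint : Integrable (fun a => p a * Real.log (p a / q a)) ν) :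
    0 ≤ ∫ a, p a * Real.log (p a / q a) ∂ν ∧
      ((∫ a, p a * Real.log (p a / q a) ∂ν) = 0 → p =ᵐ[ν] q) := by
  have hFint : Integrable (fun a => p a * Real.log (p a / q a) - p a + q a) ν :=
    (hint.sub hp.integrable).add hq.integrable
  have hF0 : ∀ᵐ a ∂ν, 0 ≤ p a * Real.log (p a / q a) - p a + q a := by
    filter_upwards [hp.2.1, hqpos] with a hpa hqa
    rcases eq_or_lt_of_le hpa with h0 | hpa'
    · simp [← h0, hqa.le]
    · have hlog := Real.log_le_sub_one_of_pos (div_pos hqa hpa')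
      have h2 : Real.log (q a / p a) = Real.log (q a) - Real.log (p a) :=
        Real.log_div hqa.ne' hpa'.ne'
      rw [h2] at hlog
      have h1 : Real.log (p a / q a) = Real.log (p a) - Real.log (q a) :=
        Real.log_div hpa'.ne' hqa.ne'
      rw [h1]
      have h4 : p a * (Real.log (q a) - Real.log (p a)) ≤ p a * (q a / p a - 1) :=
        mul_le_mul_of_nonneg_left hlog hpa
      have h5 : p a * (q a / p a - 1) = q a - p a := by field_simp
      nlinarith
  have hFval : ∫ a, (p a * Real.log (p a / q a) - p a + q a) ∂ν
      = ∫ a, p a * Real.log (p a / q a) ∂ν := by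
    have hsub : Integrable (fun a => p a * Real.log (p a / q a) - p a) ν :=
      hint.sub hp.integrable
    rw [integral_add hsub hq.integrable, integral_sub hint hp.integrable, hp.2.2, hq.2.2]
    ring
  constructor
  · have := integral_nonneg_of_ae hF0
    rw [hFval] at this
    exact this
  · intro h0
    have hz : (fun a => p a * Real.log (p a / q a) - p a + q a) =ᵐ[ν] 0 := by
      refine (integral_eq_zero_iff_of_nonneg_ae hF0 hFint).mp ?_
      rw [hFval, h0]
    filter_upwards [hz, hp.2.1, hqpos] with a hFa hpa hqa
    simp only [Pi.zero_apply] at hFa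
    rcases eq_or_lt_of_le hpa with h0' | hpa'
    · exfalso
      rw [← h0'] at hFa
      simp at hFa
      linarith
    · by_contra hne
      have hx : q a / p a ≠ 1 := by
        intro h
        rw [div_eq_one_iff_eq hpa'.ne'] at h
        exact hne h.symm
      have hlog := Real.log_lt_sub_one_of_pos (div_pos hqa hpa') hx
      have h2 : Real.log (q a / p a) = Real.log (q a) - Real.log (p a) :=
        Real.log_div hqa.ne' hpa'.ne'
      rw [h2] at hlog
      have h1 : Real.log (p a / q a) = Real.log (p a) - Real.log (q a) :=
        Real.log_div hpa'.ne' hqa.ne'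
      rw [h1] at hFa
      have h4 : p a * (Real.log (q a) - Real.log (p a)) < p a * (q a / p a - 1) :=
        (mul_lt_mul_iff_right₀ hpa').mpr hlog
      have h5 : p a * (q a / p a - 1) = q a - p a := by field_simp
      nlinarith

/-- The local fine-tuning objective with anchor density `q`:
`J(π; q) = ∫ π [(1/β)Q − (1/η) log q] − (1−λ)·KL(π‖q) − λ·KL(π‖μ)`. -/
noncomputable def Jobj {α : Type*} [MeasurableSpace α] (ν : Measure α)
    (Q q μ : α → ℝ) (l η β : ℝ) (p : α → ℝ) : EReal :=
  ((∫ a, p a * ((1 / β) * Q a - (1 / η) * Real.log (q a)) ∂ν : ℝ) : EReal)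
    - ((1 - l : ℝ) : EReal) * klE ν p q - ((l : ℝ) : EReal) * klE ν p μ

set_option maxHeartbeats 1000000 in
/-- **The tempered density is a fixed point of the Mirror Descent update.**
With `δ = λη/(1+λη)`, `κ = β(1+λη)/η`, and `π* = μ^δ exp(Q/κ)/Z`, the density `π*`
is bounded above and below by positive constants, is a probability density, and is
the unique (up to a.e. equality) maximizer of `J(· ; π*)` over all probability
densities: updating with anchor `q = π*` returns `π*` itself. -/
theorem tempered_density_is_mirror_descent_fixed_point
    {d : ℕ} (Ω : Set (EuclideanSpace ℝ (Fin d))) (hΩ : MeasurableSet Ω)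
    (hΩpos : 0 < volume Ω) (hΩfin : volume Ω < ⊤)
    (l η β : ℝ) (hl : l ∈ Set.Ioo (0 : ℝ) 1) (hη : 0 < η) (hβ : 0 < β)
    (Q : EuclideanSpace ℝ (Fin d) → ℝ) (hQm : Measurable Q)
    (MQ : ℝ) (hQbd : ∀ a ∈ Ω, |Q a| ≤ MQ)
    (μ : EuclideanSpace ℝ (Fin d) → ℝ)
    (hμ : IsProbDensity (volume.restrict Ω) μ)
    (c C : ℝ) (hc : 0 < c) (hμbd : ∀ a ∈ Ω, c ≤ μ a ∧ μ a ≤ C)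
    (δ κ : ℝ) (hδ : δ = l * η / (1 + l * η)) (hκ : κ = β * (1 + l * η) / η)
    (Z : ℝ) (hZdef : Z = ∫ a, μ a ^ δ * Real.exp (Q a / κ) ∂(volume.restrict Ω))
    (πstar : EuclideanSpace ℝ (Fin d) → ℝ)
    (hπstar : ∀ a, πstar a = μ a ^ δ * Real.exp (Q a / κ) / Z) :
    (∃ c' C' : ℝ, 0 < c' ∧ ∀ a ∈ Ω, c' ≤ πstar a ∧ πstar a ≤ C') ∧
    IsProbDensity (volume.restrict Ω) πstar ∧
    ∀ p : EuclideanSpace ℝ (Fin d) → ℝ, IsProbDensity (volume.restrict Ω) p →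
      (Jobj (volume.restrict Ω) Q πstar μ l η β p
          ≤ Jobj (volume.restrict Ω) Q πstar μ l η β πstar ∧
       (Jobj (volume.restrict Ω) Q πstar μ l η β p
          = Jobj (volume.restrict Ω) Q πstar μ l η β πstar →
        p =ᵐ[volume.restrict Ω] πstar)) := by
  obtain ⟨hl0, hl1⟩ := hl
  set ν : Measure (EuclideanSpace ℝ (Fin d)) := volume.restrict Ω with hνdef
  haveI : IsFiniteMeasure ν := ⟨by rw [hνdef, Measure.restrict_apply_univ]; exact hΩfin⟩
  have hmem : ∀ᵐ a ∂ν, a ∈ Ω := ae_restrict_mem hΩ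
  obtain ⟨a0, ha0⟩ : Ω.Nonempty := nonempty_of_measure_ne_zero hΩpos.ne'
  have hMQ : 0 ≤ MQ := le_trans (abs_nonneg _) (hQbd a0 ha0)
  have hs : (0:ℝ) < 1 + l * η := by nlinarith
  have hδpos : 0 < δ := by rw [hδ]; positivity
  have hκpos : 0 < κ := by rw [hκ]; positivity
  have hC : 0 < C := lt_of_lt_of_le hc (le_trans (hμbd a0 ha0).1 (hμbd a0 ha0).2)
  set m : ℝ := c ^ δ * Real.exp (-MQ / κ) with hm_def
  set M : ℝ := C ^ δ * Real.exp (MQ / κ) with hM_def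
  have hm : 0 < m := by positivity
  have hM : 0 < M := by positivity
  have hg_bounds : ∀ a ∈ Ω, m ≤ μ a ^ δ * Real.exp (Q a / κ) ∧
      μ a ^ δ * Real.exp (Q a / κ) ≤ M := by
    intro a ha
    obtain ⟨h1, h2⟩ := hμbd a ha
    obtain ⟨hq1, hq2⟩ := abs_le.mp (hQbd a ha)
    have hma : 0 < μ a := lt_of_lt_of_le hc h1
    constructor
    · exact mul_le_mul (Real.rpow_le_rpow hc.le h1 hδpos.le)
        (Real.exp_le_exp.mpr (div_le_div_of_nonneg_right hq1 hκpos.le))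
        (Real.exp_pos _).le (by positivity)
    · exact mul_le_mul (Real.rpow_le_rpow hma.le h2 hδpos.le)
        (Real.exp_le_exp.mpr (div_le_div_of_nonneg_right hq2 hκpos.le))
        (Real.exp_pos _).le (by positivity)
  have hgm : Measurable (fun a => μ a ^ δ * Real.exp (Q a / κ)) :=
    ((Real.continuous_rpow_const hδpos.le).measurable.comp hμ.1).mul (Real.measurable_exp.comp (hQm.div_const κ))
  have hgint : Integrable (fun a => μ a ^ δ * Real.exp (Q a / κ)) ν := by
    refine Integrable.mono' (integrable_const M) hgm.aestronglyMeasurable ?_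
    filter_upwards [hmem] with a ha
    have hma : (0:ℝ) < μ a := lt_of_lt_of_le hc (hμbd a ha).1
    rw [Real.norm_eq_abs, abs_of_nonneg
      (mul_nonneg (Real.rpow_nonneg hma.le _) (Real.exp_pos _).le)]
    exact (hg_bounds a ha).2
  have hZpos : 0 < Z := by
    have hle : ∫ _a, m ∂ν ≤ ∫ a, μ a ^ δ * Real.exp (Q a / κ) ∂ν := by
      refine integral_mono_ae (integrable_const m) hgint ?_
      filter_upwards [hmem] with a ha
      exact (hg_bounds a ha).1
    rw [integral_const, smul_eq_mul] at hle
    have ht : 0 < (ν Set.univ).toReal := by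
      rw [hνdef, Measure.restrict_apply_univ]
      exact ENNReal.toReal_pos hΩpos.ne' hΩfin.ne
    rw [hZdef]
    calc (0:ℝ) < (ν Set.univ).toReal * m := by positivity
    _ ≤ _ := hle
  set c' : ℝ := m / Z with hc'_def
  set C' : ℝ := M / Z with hC'_def
  have hc' : 0 < c' := div_pos hm hZpos
  have hC'pos : 0 < C' := div_pos hM hZpos
  have hπbd : ∀ a ∈ Ω, c' ≤ πstar a ∧ πstar a ≤ C' := by
    intro a ha
    rw [hπstar a]
    exact ⟨div_le_div_of_nonneg_right (hg_bounds a ha).1 hZpos.le,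
      div_le_div_of_nonneg_right (hg_bounds a ha).2 hZpos.le⟩
  have hπeq : πstar = fun a => (μ a ^ δ * Real.exp (Q a / κ)) / Z := funext hπstar
  have hπm : Measurable πstar := by rw [hπeq]; exact hgm.div_const Z
  have hπnn : ∀ᵐ a ∂ν, 0 ≤ πstar a := by
    filter_upwards [hmem] with a ha
    exact le_trans hc'.le (hπbd a ha).1
  have hπint1 : ∫ a, πstar a ∂ν = 1 := by
    rw [hπeq]
    rw [integral_div, ← hZdef]
    exact div_self hZpos.ne'
  have hπdens : IsProbDensity ν πstar := ⟨hπm, hπnn, hπint1⟩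
  have hπpos : ∀ᵐ a ∂ν, 0 < πstar a := by
    filter_upwards [hmem] with a ha
    exact lt_of_lt_of_le hc' (hπbd a ha).1
  -- bound on |log πstar|
  have hπlogbd : ∀ a ∈ Ω, |Real.log (πstar a)| ≤ |Real.log c'| + |Real.log C'| := by
    intro a ha
    have hlo : Real.log c' ≤ Real.log (πstar a) := Real.log_le_log hc' (hπbd a ha).1
    have hhi : Real.log (πstar a) ≤ Real.log C' :=
      Real.log_le_log (lt_of_lt_of_le hc' (hπbd a ha).1) (hπbd a ha).2
    rw [abs_le]
    constructor
    · have := neg_abs_le (Real.log c')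
      have := abs_nonneg (Real.log C')
      linarith
    · have := le_abs_self (Real.log C')
      have := abs_nonneg (Real.log c')
      linarith
  -- integrability of the linear part
  set B : ℝ := 1 / β * MQ + 1 / η * (|Real.log c'| + |Real.log C'|) with hB_def
  have hB : ∀ a ∈ Ω, |1 / β * Q a - 1 / η * Real.log (πstar a)| ≤ B := by
    intro a ha
    calc |1 / β * Q a - 1 / η * Real.log (πstar a)|
        ≤ |1 / β * Q a| + |1 / η * Real.log (πstar a)| := abs_sub _ _
    _ = 1 / β * |Q a| + 1 / η * |Real.log (πstar a)| := by
        rw [abs_mul, abs_mul, abs_of_nonneg (by positivity : (0:ℝ) ≤ 1 / β),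
          abs_of_nonneg (by positivity : (0:ℝ) ≤ 1 / η)]
    _ ≤ B := by
        rw [hB_def]
        have h1 := hQbd a ha
        have h2 := hπlogbd a ha
        have hb1 : (0:ℝ) ≤ 1 / β := by positivity
        have hb2 : (0:ℝ) ≤ 1 / η := by positivity
        nlinarith
  have hIint : ∀ p : EuclideanSpace ℝ (Fin d) → ℝ, IsProbDensity ν p →
      Integrable (fun a => p a * (1 / β * Q a - 1 / η * Real.log (πstar a))) ν := by
    intro p hp
    refine Integrable.mono' (hp.integrable.mul_const B)
      ((hp.1.mul ((measurable_const.mul hQm).sub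
        (measurable_const.mul (Real.measurable_log.comp hπm)))).aestronglyMeasurable) ?_
    filter_upwards [hmem, hp.2.1] with a ha hpa
    rw [Real.norm_eq_abs, abs_mul, abs_of_nonneg hpa]
    exact mul_le_mul_of_nonneg_left (hB a ha) hpa
  -- the key algebraic identity
  have key : ∀ p : EuclideanSpace ℝ (Fin d) → ℝ, IsProbDensity ν p →
      Integrable (fun a => p a * Real.log (p a / πstar a)) ν →
      Integrable (fun a => p a * Real.log (p a / μ a)) ν →
      (∫ a, p a * (1 / β * Q a - 1 / η * Real.log (πstar a)) ∂ν)
        + l * (∫ a, p a * Real.log (p a / πstar a) ∂ν)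
        - l * (∫ a, p a * Real.log (p a / μ a) ∂ν)
        = (1 / η + l) * Real.log Z := by
    intro p hp hK1 hK2
    have hIp := hIint p hp
    have hpoint : ∀ᵐ a ∂ν,
        p a * (1 / β * Q a - 1 / η * Real.log (πstar a))
          + l * (p a * Real.log (p a / πstar a))
          - l * (p a * Real.log (p a / μ a))
          = p a * ((1 / η + l) * Real.log Z) := by
      filter_upwards [hmem, hp.2.1] with a ha hpa
      have hma : 0 < μ a := lt_of_lt_of_le hc (hμbd a ha).1
      have hπa : 0 < πstar a := lt_of_lt_of_le hc' (hπbd a ha).1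
      have hL : Real.log (πstar a) = δ * Real.log (μ a) + Q a / κ - Real.log Z := by
        rw [hπstar a, Real.log_div (by positivity) hZpos.ne',
          Real.log_mul (by positivity) (Real.exp_ne_zero _), Real.log_rpow hma,
          Real.log_exp]
      rcases eq_or_lt_of_le hpa with h0 | hpa'
      · rw [← h0]; ring
      · rw [Real.log_div hpa'.ne' hπa.ne', Real.log_div hpa'.ne' hma.ne', hL, hδ, hκ]
        field_simp
        ring
    have hf1 : Integrable (fun a => p a * (1 / β * Q a - 1 / η * Real.log (πstar a))
        + l * (p a * Real.log (p a / πstar a))) ν := hIp.add (hK1.const_mul l)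
    have hf2 : Integrable (fun a => l * (p a * Real.log (p a / μ a))) ν := hK2.const_mul l
    have e1 : ∫ a, (p a * (1 / β * Q a - 1 / η * Real.log (πstar a))
          + l * (p a * Real.log (p a / πstar a))
          - l * (p a * Real.log (p a / μ a))) ∂ν
        = (∫ a, p a * (1 / β * Q a - 1 / η * Real.log (πstar a)) ∂ν)
          + l * (∫ a, p a * Real.log (p a / πstar a) ∂ν)
          - l * (∫ a, p a * Real.log (p a / μ a) ∂ν) := by
      rw [integral_sub hf1 hf2, integral_add hIp (hK1.const_mul l),
        integral_const_mul, integral_const_mul]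
    rw [← e1, integral_congr_ae hpoint, integral_mul_const, hp.2.2, one_mul]
  -- value at πstar
  have hK1s : Integrable (fun a => πstar a * Real.log (πstar a / πstar a)) ν := by
    refine (integrable_zero _ _ ν).congr ?_
    filter_upwards [hπpos] with a hπa
    rw [div_self hπa.ne', Real.log_one, mul_zero]
    rfl
  have hK1sval : ∫ a, πstar a * Real.log (πstar a / πstar a) ∂ν = 0 := by
    rw [integral_congr_ae (g := fun _ => (0:ℝ)) ?_, integral_zero]
    filter_upwards [hπpos] with a hπa
    rw [div_self hπa.ne', Real.log_one, mul_zero]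
  have hK2s : Integrable (fun a => πstar a * Real.log (πstar a / μ a)) ν := by
    refine Integrable.mono' (integrable_const
      (C' * (|Real.log c'| + |Real.log C'| + (|Real.log c| + |Real.log C|))))
      ((hπm.mul (Real.measurable_log.comp (hπm.div hμ.1))).aestronglyMeasurable) ?_
    filter_upwards [hmem] with a ha
    have hma : 0 < μ a := lt_of_lt_of_le hc (hμbd a ha).1
    have hπa : 0 < πstar a := lt_of_lt_of_le hc' (hπbd a ha).1
    have hμlog : |Real.log (μ a)| ≤ |Real.log c| + |Real.log C| := by
      have hlo : Real.log c ≤ Real.log (μ a) := Real.log_le_log hc (hμbd a ha).1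
      have hhi : Real.log (μ a) ≤ Real.log C := Real.log_le_log hma (hμbd a ha).2
      rw [abs_le]
      constructor
      · have := neg_abs_le (Real.log c)
        have := abs_nonneg (Real.log C)
        linarith
      · have := le_abs_self (Real.log C)
        have := abs_nonneg (Real.log c)
        linarith
    rw [Real.norm_eq_abs, abs_mul, abs_of_nonneg hπa.le,
      Real.log_div hπa.ne' hma.ne']
    have h1 : |Real.log (πstar a) - Real.log (μ a)|
        ≤ |Real.log c'| + |Real.log C'| + (|Real.log c| + |Real.log C|) := by
      calc |Real.log (πstar a) - Real.log (μ a)|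
          ≤ |Real.log (πstar a)| + |Real.log (μ a)| := abs_sub _ _
      _ ≤ _ := add_le_add (hπlogbd a ha) hμlog
    exact mul_le_mul (hπbd a ha).2 h1 (abs_nonneg _) hC'pos.le
  have hJstar : Jobj ν Q πstar μ l η β πstar
      = (((1 / η + l) * Real.log Z : ℝ) : EReal) := by
    have hks := key πstar hπdens hK1s hK2s
    rw [hK1sval, mul_zero, add_zero] at hks
    simp only [Jobj, klE, if_pos hK1s, if_pos hK2s, hK1sval]
    norm_cast
    linarith only [hks]
  refine ⟨⟨c', C', hc', hπbd⟩, hπdens, ?_⟩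
  intro p hp
  by_cases hK1 : Integrable (fun a => p a * Real.log (p a / πstar a)) ν
  · by_cases hK2 : Integrable (fun a => p a * Real.log (p a / μ a)) ν
    · have hks := key p hp hK1 hK2
      obtain ⟨hge, heq⟩ := gibbs_aux hp hπdens hπpos hK1
      have hJp : Jobj ν Q πstar μ l η β p
          = (((∫ a, p a * (1 / β * Q a - 1 / η * Real.log (πstar a)) ∂ν)
              - (1 - l) * (∫ a, p a * Real.log (p a / πstar a) ∂ν)
              - l * (∫ a, p a * Real.log (p a / μ a) ∂ν) : ℝ) : EReal) := by
        simp only [Jobj, klE, if_pos hK1, if_pos hK2]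
        norm_cast
      rw [hJp, hJstar]
      constructor
      · rw [EReal.coe_le_coe_iff]
        linarith only [hks, hge]
      · intro hEq
        rw [EReal.coe_eq_coe_iff] at hEq
        exact heq (by linarith only [hks, hEq])
    · have hbot : Jobj ν Q πstar μ l η β p = ⊥ := by
        simp only [Jobj, klE, if_pos hK1, if_neg hK2]
        rw [EReal.coe_mul_top_of_pos hl0, EReal.sub_top]
      rw [hbot, hJstar]
      exact ⟨bot_le, fun h => absurd h (EReal.bot_ne_coe _)⟩
  · have hbot : Jobj ν Q πstar μ l η β p = ⊥ := by
      simp only [Jobj, klE, if_neg hK1]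
      rw [EReal.coe_mul_top_of_pos (by linarith : (0:ℝ) < 1 - l), EReal.sub_top,
        EReal.bot_sub]
    rw [hbot, hJstar]
    exact ⟨bot_le, fun h => absurd h (EReal.bot_ne_coe _)⟩
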